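/- Let a1, a2, a3 be real numbers with a1*a2*a3 ≠ 0 and A = a1*a2 + a1*a3 + a2*a3 ≠ 0. If there exist positive reals x1, x2, x3 satisfying system (S) together with F1(x1,x2,x3) = 0 (i.e., the corresponding singular point of the reduced planar Ricci flow system has vanishing trace ρ), then Q1(a1,a2,a3) := 4*(a1+a2)*(a1+a3)*(a2+a3) - 2*a1 - 2*a2 - 2*a3 + 1 = 0. -/

import Mathlib

noncomputable section
open Real Set

/-- `A = a1*a2 + a1*a3 + a2*a3`. -/
def AA (a1 a2 a3 : ℝ) : ℝ := a1*a2 + a1*a3 + a2*a3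

/-- First equation of system (S). -/
def eqS1 (a1 a2 a3 x1 x2 x3 : ℝ) : Prop :=
  (a2 + a3)*(a1*x2^2 + a1*x3^2 - x2*x3) + (a2*x2 + a3*x3)*x1
    - (a1*a2 + a1*a3 + 2*a2*a3)*x1^2 = 0

/-- Second equation of system (S). -/
def eqS2 (a1 a2 a3 x1 x2 x3 : ℝ) : Prop :=
  (a1 + a3)*(a2*x1^2 + a2*x3^2 - x1*x3) + (a1*x1 + a3*x3)*x2
    - (a1*a2 + 2*a1*a3 + a2*a3)*x2^2 = 0

/-- The quantity `F1` (trace numerator). -/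
def F1 (a1 a2 a3 x1 x2 x3 : ℝ) : ℝ :=
  a1*a2*x1*x2 + a1*a3*x1*x3 + a2*a3*x2*x3
    - (AA a1 a2 a3 + a2*a3)*a1*x1^2 - (AA a1 a2 a3 + a1*a3)*a2*x2^2
    - (AA a1 a2 a3 + a1*a2)*a3*x3^2

set_option maxHeartbeats 2000000 in
theorem trace_zero_singular_point_implies_Q1_zero (a1 a2 a3 : ℝ)
    (ha : a1*a2*a3 ≠ 0) (hA : AA a1 a2 a3 ≠ 0)
    (h : ∃ x1 x2 x3 : ℝ, 0 < x1 ∧ 0 < x2 ∧ 0 < x3 ∧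
      eqS1 a1 a2 a3 x1 x2 x3 ∧ eqS2 a1 a2 a3 x1 x2 x3 ∧ F1 a1 a2 a3 x1 x2 x3 = 0) :
    4*(a1 + a2)*(a1 + a3)*(a2 + a3) - 2*a1 - 2*a2 - 2*a3 + 1 = 0 := by
  obtain ⟨x1, x2, x3, hx1, hx2, hx3, h1, h2, h3⟩ := h
  unfold eqS1 at h1
  unfold eqS2 at h2
  unfold F1 AA at h3
  unfold AA at hA
  have ha1 : a1 ≠ 0 := fun hz => ha (by rw [hz]; ring)
  have ha2 : a2 ≠ 0 := fun hz => ha (by rw [hz]; ring)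
  have ha3 : a3 ≠ 0 := fun hz => ha (by rw [hz]; ring)
  have hx3' : x3 ≠ 0 := ne_of_gt hx3
  obtain ⟨y1, y2, hy1, hy2, hP1, hP2, hP3⟩ :
      ∃ y1 y2 : ℝ, 0 < y1 ∧ 0 < y2 ∧
        (a2 + a3)*(a1*y2^2 + a1 - y2) + (a2*y2 + a3)*y1
          - (a1*a2 + a1*a3 + 2*a2*a3)*y1^2 = 0 ∧
        (a1 + a3)*(a2*y1^2 + a2 - y1) + (a1*y1 + a3)*y2
          - (a1*a2 + 2*a1*a3 + a2*a3)*y2^2 = 0 ∧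
        a1*a2*y1*y2 + a1*a3*y1 + a2*a3*y2
          - ((a1*a2 + a1*a3 + a2*a3) + a2*a3)*a1*y1^2
          - ((a1*a2 + a1*a3 + a2*a3) + a1*a3)*a2*y2^2
          - ((a1*a2 + a1*a3 + a2*a3) + a1*a2)*a3 = 0 := by
    refine ⟨x1/x3, x2/x3, div_pos hx1 hx3, div_pos hx2 hx3, ?_, ?_, ?_⟩
    · field_simp
      linear_combination h1
    · field_simp
      linear_combination h2
    · field_simp
      linear_combination h3
  have hy1' : y1 ≠ 0 := ne_of_gt hy1
  have hy2' : y2 ≠ 0 := ne_of_gt hy2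
  -- key structural identities: a1*P1 - P3 = A*H and a2*P2 - P3 = A*G
  have hH : (a1+a2)*y2^2 - y2 + (a1+a3) = 0 := by
    have key : (a1*a2 + a1*a3 + a2*a3) * ((a1+a2)*y2^2 - y2 + (a1+a3)) = 0 := by
      linear_combination a1*hP1 - hP3
    exact (mul_eq_zero.mp key).resolve_left hA
  have hG : (a1+a2)*y1^2 - y1 + (a2+a3) = 0 := by
    have key : (a1*a2 + a1*a3 + a2*a3) * ((a1+a2)*y1^2 - y1 + (a2+a3)) = 0 := by
      linear_combination a2*hP2 - hP3
    exact (mul_eq_zero.mp key).resolve_left hA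
  by_cases h12 : a1 + a2 = 0
  · -- case a1 + a2 = 0
    have hv1 : y1 = a2 + a3 := by linear_combination (-1 : ℝ)*hG + y1^2 * h12
    have hv2 : y2 = a1 + a3 := by linear_combination (-1 : ℝ)*hH + y2^2 * h12
    have key : a1^2*(2*a3 - 1)*(y1*y2) = 0 := by
      linear_combination hP3 + ((-1 : ℝ)*a1*a3 + (-1 : ℝ)*a1*a2*y2 + (2 : ℝ)*a1*a2*a3*y1 + (2 : ℝ)*a1*a2*a3^2 + (2 : ℝ)*a1*a2^2*a3 + (-1 : ℝ)*a1^2*y2 + (2 : ℝ)*a1^2*a3*y2 + (1 : ℝ)*a1^2*a3*y1 + (1 : ℝ)*a1^2*a3^2 + (1 : ℝ)*a1^2*a2*y1 + (2 : ℝ)*a1^2*a2*a3 + (1 : ℝ)*a1^2*a2^2)*hv1 + ((-1 : ℝ)*a2*a3 + (1 : ℝ)*a2^2*a3*y2 + (1 : ℝ)*a2^2*a3^2 + (-1 : ℝ)*a1*a2*a3 + (2 : ℝ)*a1*a2*a3*y2 + (2 : ℝ)*a1*a2*a3^2 + (-1 : ℝ)*a1*a2^2 + (1 : ℝ)*a1*a2^2*y2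 + (2 : ℝ)*a1*a2^2*a3 + (-1 : ℝ)*a1^2*a3 + (2 : ℝ)*a1^2*a3^2 + (-1 : ℝ)*a1^2*a2 + (4 : ℝ)*a1^2*a2*a3 + (1 : ℝ)*a1^2*a2^2)*hv2 + ((1 : ℝ)*a2*a3^3 + (-1 : ℝ)*a1*a3^2 + (3 : ℝ)*a1*a3^3 + (-1 : ℝ)*a1*a2*a3 + (7 : ℝ)*a1*a2*a3^2 + (2 : ℝ)*a1*a2^2*a3 + (-1 : ℝ)*a1^2*a3 + (2 : ℝ)*a1^2*a3^2 + (-1 : ℝ)*a1^2*a2 + (4 : ℝ)*a1^2*a2*a3 + (1 : ℝ)*a1^2*a2^2)*h12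
    have h2a3 : 2*a3 - 1 = 0 := by
      have hne : a1^2*(2*a3-1)*(y1*y2) = (a1^2*(y1*y2))*(2*a3-1) := by ring
      rw [hne] at key
      rcases mul_eq_zero.mp key with h' | h'
      · exact absurd h' (mul_ne_zero (pow_ne_zero 2 ha1) (mul_ne_zero hy1' hy2'))
      · exact h'
    linear_combination (4*(a1+a3)*(a2+a3) - 2)*h12 - h2a3
  · -- a1 + a2 ≠ 0 : derive T = 0
    have hT : (a1+a2)*y1*y2 - (a1+a3)*y1 - (a2+a3)*y2 + 2*(a1+a3)*(a2+a3) = 0 := by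
      have key : (a1*a2*(a1+a2)) * ((a1+a2)*y1*y2 - (a1+a3)*y1 - (a2+a3)*y2 + 2*(a1+a3)*(a2+a3)) = 0 := by
        linear_combination (a1+a2)^2*hP3 - ((a1+a2)*((-2 : ℝ)*a1*a2*a3 + (-1 : ℝ)*a1^2*a3 + (-1 : ℝ)*a1^2*a2))*hG - ((-1 : ℝ)*a2^3*a3 + (-3 : ℝ)*a1*a2^2*a3 + (-1 : ℝ)*a1*a2^3 + (-2 : ℝ)*a1^2*a2*a3 + (-1 : ℝ)*a1^2*a2^2)*hH
      exact (mul_eq_zero.mp key).resolve_left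
        (mul_ne_zero (mul_ne_zero ha1 ha2) h12)
    by_cases h13 : a1 + a3 = 0
    · -- case a1 + a3 = 0
      have hb2 : (a1+a2)*y2 = 1 := by
        have key : y2 * ((a1+a2)*y2 - 1) = 0 := by linear_combination hH - h13
        rcases mul_eq_zero.mp key with h' | h'
        · exact absurd h' hy2'
        · linarith
      have hb1 : (a1+a2)*y1 = a2 + a3 := by
        have key : y2 * ((a1+a2)*y1 - (a2+a3)) = 0 := by
          linear_combination hT + (y1 - 2*(a2+a3))*h13
        rcases mul_eq_zero.mp key with h' | h'
        · exact absurd h' hy2'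
        · linarith
      by_cases h23 : a2 + a3 = 0
      · exfalso
        have : (a1+a2)*y1 = 0 := by rw [hb1, h23]
        rcases mul_eq_zero.mp this with h' | h'
        · exact h12 h'
        · exact hy1' h'
      · have hsum : a1 + 2*a2 + a3 - 1 = 0 := by
          have key : (a2+a3) * (a1 + 2*a2 + a3 - 1) = 0 := by
            linear_combination (a1+a2)*hG - ((a1+a2)*y1 + (a2+a3) - 1)*hb1
          exact (mul_eq_zero.mp key).resolve_left h23
        linear_combination (4*(a1+a2)*(a2+a3) - 1)*h13 - hsum
    · by_cases h23 : a2 + a3 = 0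
      · -- case a2 + a3 = 0
        have hb1 : (a1+a2)*y1 = 1 := by
          have key : y1 * ((a1+a2)*y1 - 1) = 0 := by linear_combination hG - h23
          rcases mul_eq_zero.mp key with h' | h'
          · exact absurd h' hy1'
          · linarith
        have hb2 : (a1+a2)*y2 = a1 + a3 := by
          have key : y1 * ((a1+a2)*y2 - (a1+a3)) = 0 := by
            linear_combination hT + (y2 - 2*(a1+a3))*h23
          rcases mul_eq_zero.mp key with h' | h'
          · exact absurd h' hy1'
          · linarith
        have hsum : 2*a1 + a2 + a3 - 1 = 0 := by
          have key : (a1+a3) * (2*a1 + a2 + a3 - 1) = 0 := by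
            linear_combination (a1+a2)*hH - ((a1+a2)*y2 + (a1+a3) - 1)*hb2
          exact (mul_eq_zero.mp key).resolve_left h13
        linear_combination (4*(a1+a2)*(a1+a3) - 1)*h23 - hsum
      · -- main case
        have hW : (1 : ℝ)*a3^2*y1 + (-1 : ℝ)*a3^3 + (1 : ℝ)*a2*a3*y1 + (-1 : ℝ)*a2*a3*y1^2 + (-2 : ℝ)*a2*a3^2 + (1 : ℝ)*a2*a3^2*y1^2 + (-4 : ℝ)*a2*a3^3*y1 + (4 : ℝ)*a2*a3^4 + (-1 : ℝ)*a2^2*a3 + (1 : ℝ)*a2^2*a3*y1^2 + (-4 : ℝ)*a2^2*a3^2*y1 + (8 : ℝ)*a2^2*a3^3 + (4 : ℝ)*a2^3*a3^2 + (1 : ℝ)*a1*a3*y1 + (-1 : ℝ)*a1*a3*y1^2 + (-1 : ℝ)*a1*a3^2 + (1 : ℝ)*a1*a3^2*y1^2 + (-4 : ℝ)*a1*a3^3*y1 + (4 : ℝ)*a1*a3^4 + (1 : ℝ)*a1*a2*y1 + (-1 : ℝ)*a1*a2*y1^2 + (-2 : ℝ)*a1*a2*a3 + (4 : ℝ)*a1*a2*a3*y1^2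 + (-12 : ℝ)*a1*a2*a3^2*y1 + (16 : ℝ)*a1*a2*a3^3 + (-1 : ℝ)*a1*a2^2 + (1 : ℝ)*a1*a2^2*y1^2 + (-8 : ℝ)*a1*a2^2*a3*y1 + (20 : ℝ)*a1*a2^2*a3^2 + (8 : ℝ)*a1*a2^3*a3 + (-1 : ℝ)*a1^2*y1^2 + (3 : ℝ)*a1^2*a3*y1^2 + (-8 : ℝ)*a1^2*a3^2*y1 + (8 : ℝ)*a1^2*a3^3 + (3 : ℝ)*a1^2*a2*y1^2 + (-12 : ℝ)*a1^2*a2*a3*y1 + (20 : ℝ)*a1^2*a2*a3^2 + (-4 : ℝ)*a1^2*a2^2*y1 + (16 : ℝ)*a1^2*a2^2*a3 + (4 : ℝ)*a1^2*a2^3 + (2 : ℝ)*a1^3*y1^2 + (-4 : ℝ)*a1^3*a3*y1 + (4 : ℝ)*a1^3*a3^2 + (-4 : ℝ)*a1^3*a2*y1 + (8 : ℝ)*a1^3*a2*a3 + (4 : ℝ)*a1^3*a2^2 = 0 := by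
          linear_combination ((1 : ℝ)*a3^2 + (2 : ℝ)*a2*a3 + (-2 : ℝ)*a2*a3*y1 + (1 : ℝ)*a2^2 + (-2 : ℝ)*a2^2*y1 + (1 : ℝ)*a2^2*y1^2 + (-2 : ℝ)*a1*a3*y1 + (-2 : ℝ)*a1*a2*y1 + (2 : ℝ)*a1*a2*y1^2 + (1 : ℝ)*a1^2*y1^2)*hH + ((-1 : ℝ)*a3 + (-1 : ℝ)*a2 + (1 : ℝ)*a2*y1 + (1 : ℝ)*a2*a3*y2 + (-1 : ℝ)*a2*a3*y1 + (2 : ℝ)*a2*a3^2 + (1 : ℝ)*a2^2*y2 + (-1 : ℝ)*a2^2*y1*y2 + (2 : ℝ)*a2^2*a3 + (1 : ℝ)*a1*y1 + (1 : ℝ)*a1*a3*y2 + (-1 : ℝ)*a1*a3*y1 + (2 : ℝ)*a1*a3^2 + (1 : ℝ)*a1*a2*y2 + (-1 : ℝ)*a1*a2*y1 + (-2 : ℝ)*a1*a2*y1*y2 + (4 : ℝ)*a1*a2*a3 + (2 : ℝ)*a1*a2^2 + (-1 : ℝ)*a1^2*y1 + (-1 : ℝ)*a1^2*y1*y2 +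 (2 : ℝ)*a1^2*a3 + (2 : ℝ)*a1^2*a2)*hT
        have hE : ((a1+a2)*(a1+a3)*(a2+a3)*(4*(a1 + a2)*(a1 + a3)*(a2 + a3) - 2*a1 - 2*a2 - 2*a3 + 1))^2 = 0 := by
          linear_combination ((-1 : ℝ)*a2*a3^3 + (2 : ℝ)*a2*a3^4 + (-1 : ℝ)*a2^2*a3^2 + (1 : ℝ)*a2^2*a3^2*y1 + (5 : ℝ)*a2^2*a3^3 + (-3 : ℝ)*a2^2*a3^3*y1 + (1 : ℝ)*a2^2*a3^4 + (2 : ℝ)*a2^2*a3^4*y1 + (-10 : ℝ)*a2^2*a3^5 + (3 : ℝ)*a2^3*a3^2 + (-3 : ℝ)*a2^3*a3^2*y1 + (-2 : ℝ)*a2^3*a3^3 + (4 : ℝ)*a2^3*a3^3*y1 + (-18 : ℝ)*a2^3*a3^4 + (4 : ℝ)*a2^3*a3^4*y1 + (4 : ℝ)*a2^3*a3^5 + (-4 : ℝ)*a2^3*a3^5*y1 + (12 : ℝ)*a2^3*a3^6 + (-3 : ℝ)*a2^4*a3^2 + (2 : ℝ)*a2^4*a3^2*y1 + (-6 : ℝ)*a2^4*a3^3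 + (4 : ℝ)*a2^4*a3^3*y1 + (8 : ℝ)*a2^4*a3^4 + (-8 : ℝ)*a2^4*a3^4*y1 + (20 : ℝ)*a2^4*a3^5 + (2 : ℝ)*a2^5*a3^2 + (4 : ℝ)*a2^5*a3^3 + (-4 : ℝ)*a2^5*a3^3*y1 + (4 : ℝ)*a2^5*a3^4 + (-4 : ℝ)*a2^6*a3^3 + (-1 : ℝ)*a1*a3^3 + (2 : ℝ)*a1*a3^4 + (-3 : ℝ)*a1*a2*a3^2 + (2 : ℝ)*a1*a2*a3^2*y1 + (12 : ℝ)*a1*a2*a3^3 + (-6 : ℝ)*a1*a2*a3^3*y1 + (2 : ℝ)*a1*a2*a3^4 + (4 : ℝ)*a1*a2*a3^4*y1 + (-20 : ℝ)*a1*a2*a3^5 + (-2 : ℝ)*a1*a2^2*a3 + (2 : ℝ)*a1*a2^2*a3*y1 + (16 : ℝ)*a1*a2^2*a3^2 + (-16 : ℝ)*a1*a2^2*a3^2*y1 + (-2 : ℝ)*a1*a2^2*a3^3 + (18 : ℝ)*a1*a2^2*a3^3*y1 + (-70 : ℝ)*a1*a2^2*a3^4 + (12 : ℝ)*a1*a2^2*a3^4*y1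 + (12 : ℝ)*a1*a2^2*a3^5 + (-12 : ℝ)*a1*a2^2*a3^5*y1 + (36 : ℝ)*a1*a2^2*a3^6 + (6 : ℝ)*a1*a2^3*a3 + (-6 : ℝ)*a1*a2^3*a3*y1 + (-10 : ℝ)*a1*a2^3*a3^2 + (18 : ℝ)*a1*a2^3*a3^2*y1 + (-68 : ℝ)*a1*a2^3*a3^3 + (24 : ℝ)*a1*a2^3*a3^3*y1 + (36 : ℝ)*a1*a2^3*a3^4 + (-44 : ℝ)*a1*a2^3*a3^4*y1 + (104 : ℝ)*a1*a2^3*a3^5 + (-6 : ℝ)*a1*a2^4*a3 + (4 : ℝ)*a1*a2^4*a3*y1 + (-14 : ℝ)*a1*a2^4*a3^2 + (12 : ℝ)*a1*a2^4*a3^2*y1 + (36 : ℝ)*a1*a2^4*a3^3 + (-44 : ℝ)*a1*a2^4*a3^3*y1 + (88 : ℝ)*a1*a2^4*a3^4 + (4 : ℝ)*a1*a2^5*a3 + (12 : ℝ)*a1*a2^5*a3^2 + (-12 : ℝ)*a1*a2^5*a3^2*y1 + (8 : ℝ)*a1*a2^5*a3^3 + (-12 : ℝ)*a1*a2^6*a3^2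 + (-2 : ℝ)*a1^2*a3^2 + (1 : ℝ)*a1^2*a3^2*y1 + (7 : ℝ)*a1^2*a3^3 + (-3 : ℝ)*a1^2*a3^3*y1 + (1 : ℝ)*a1^2*a3^4 + (2 : ℝ)*a1^2*a3^4*y1 + (-10 : ℝ)*a1^2*a3^5 + (-3 : ℝ)*a1^2*a2*a3 + (4 : ℝ)*a1^2*a2*a3*y1 + (21 : ℝ)*a1^2*a2*a3^2 + (-23 : ℝ)*a1^2*a2*a3^2*y1 + (2 : ℝ)*a1^2*a2*a3^3 + (24 : ℝ)*a1^2*a2*a3^3*y1 + (-86 : ℝ)*a1^2*a2*a3^4 + (12 : ℝ)*a1^2*a2*a3^4*y1 + (12 : ℝ)*a1^2*a2*a3^5 + (-12 : ℝ)*a1^2*a2*a3^5*y1 + (36 : ℝ)*a1^2*a2*a3^6 + (-1 : ℝ)*a1^2*a2^2 + (1 : ℝ)*a1^2*a2^2*y1 + (17 : ℝ)*a1^2*a2^2*a3 + (-23 : ℝ)*a1^2*a2^2*a3*y1 + (-10 : ℝ)*a1^2*a2^2*a3^2 + (48 : ℝ)*a1^2*a2^2*a3^2*y1 + (-160 : ℝ)*a1^2*a2^2*a3^3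 + (48 : ℝ)*a1^2*a2^2*a3^3*y1 + (60 : ℝ)*a1^2*a2^2*a3^4 + (-84 : ℝ)*a1^2*a2^2*a3^4*y1 + (192 : ℝ)*a1^2*a2^2*a3^5 + (3 : ℝ)*a1^2*a2^3 + (-3 : ℝ)*a1^2*a2^3*y1 + (-14 : ℝ)*a1^2*a2^3*a3 + (24 : ℝ)*a1^2*a2^3*a3*y1 + (-96 : ℝ)*a1^2*a2^3*a3^2 + (48 : ℝ)*a1^2*a2^3*a3^2*y1 + (96 : ℝ)*a1^2*a2^3*a3^3 + (-144 : ℝ)*a1^2*a2^3*a3^3*y1 + (300 : ℝ)*a1^2*a2^3*a3^4 + (-3 : ℝ)*a1^2*a2^4 + (2 : ℝ)*a1^2*a2^4*y1 + (-10 : ℝ)*a1^2*a2^4*a3 + (12 : ℝ)*a1^2*a2^4*a3*y1 + (60 : ℝ)*a1^2*a2^4*a3^2 + (-84 : ℝ)*a1^2*a2^4*a3^2*y1 + (156 : ℝ)*a1^2*a2^4*a3^3 + (2 : ℝ)*a1^2*a2^5 + (12 : ℝ)*a1^2*a2^5*a3 + (-12 : ℝ)*a1^2*a2^5*a3*y1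 + (-12 : ℝ)*a1^2*a2^6*a3 + (-1 : ℝ)*a1^3*a3 + (2 : ℝ)*a1^3*a3*y1 + (8 : ℝ)*a1^3*a3^2 + (-10 : ℝ)*a1^3*a3^2*y1 + (2 : ℝ)*a1^3*a3^3 + (10 : ℝ)*a1^3*a3^3*y1 + (-34 : ℝ)*a1^3*a3^4 + (4 : ℝ)*a1^3*a3^4*y1 + (4 : ℝ)*a1^3*a3^5 + (-4 : ℝ)*a1^3*a3^5*y1 + (12 : ℝ)*a1^3*a3^6 + (-1 : ℝ)*a1^3*a2 + (2 : ℝ)*a1^3*a2*y1 + (14 : ℝ)*a1^3*a2*a3 + (-28 : ℝ)*a1^3*a2*a3*y1 + (-2 : ℝ)*a1^3*a2*a3^2 + (50 : ℝ)*a1^3*a2*a3^2*y1 + (-140 : ℝ)*a1^3*a2*a3^3 + (40 : ℝ)*a1^3*a2*a3^3*y1 + (44 : ℝ)*a1^3*a2*a3^4 + (-68 : ℝ)*a1^3*a2*a3^4*y1 + (152 : ℝ)*a1^3*a2*a3^5 + (6 : ℝ)*a1^3*a2^2 + (-10 : ℝ)*a1^3*a2^2*y1 + (-10 : ℝ)*a1^3*a2^2*a3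 + (50 : ℝ)*a1^3*a2^2*a3*y1 + (-164 : ℝ)*a1^3*a2^2*a3^2 + (72 : ℝ)*a1^3*a2^2*a3^2*y1 + (112 : ℝ)*a1^3*a2^2*a3^3 + (-208 : ℝ)*a1^3*a2^2*a3^3*y1 + (412 : ℝ)*a1^3*a2^2*a3^4 + (-6 : ℝ)*a1^3*a2^3 + (10 : ℝ)*a1^3*a2^3*y1 + (-60 : ℝ)*a1^3*a2^3*a3 + (40 : ℝ)*a1^3*a2^3*a3*y1 + (112 : ℝ)*a1^3*a2^3*a3^2 + (-208 : ℝ)*a1^3*a2^3*a3^2*y1 + (416 : ℝ)*a1^3*a2^3*a3^3 + (-2 : ℝ)*a1^3*a2^4 + (4 : ℝ)*a1^3*a2^4*y1 + (44 : ℝ)*a1^3*a2^4*a3 + (-68 : ℝ)*a1^3*a2^4*a3*y1 + (140 : ℝ)*a1^3*a2^4*a3^2 + (4 : ℝ)*a1^3*a2^5 + (-4 : ℝ)*a1^3*a2^5*y1 + (-8 : ℝ)*a1^3*a2^5*a3 + (-4 : ℝ)*a1^3*a2^6 + (1 : ℝ)*a1^4*y1 + (3 : ℝ)*a1^4*a3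 + (-11 : ℝ)*a1^4*a3*y1 + (1 : ℝ)*a1^4*a3^2 + (18 : ℝ)*a1^4*a3^2*y1 + (-42 : ℝ)*a1^4*a3^3 + (12 : ℝ)*a1^4*a3^3*y1 + (12 : ℝ)*a1^4*a3^4 + (-20 : ℝ)*a1^4*a3^4*y1 + (44 : ℝ)*a1^4*a3^5 + (3 : ℝ)*a1^4*a2 + (-11 : ℝ)*a1^4*a2*y1 + (-2 : ℝ)*a1^4*a2*a3 + (44 : ℝ)*a1^4*a2*a3*y1 + (-106 : ℝ)*a1^4*a2*a3^2 + (48 : ℝ)*a1^4*a2*a3^2*y1 + (60 : ℝ)*a1^4*a2*a3^3 + (-140 : ℝ)*a1^4*a2*a3^3*y1 + (256 : ℝ)*a1^4*a2*a3^4 + (-3 : ℝ)*a1^4*a2^2 + (18 : ℝ)*a1^4*a2^2*y1 + (-78 : ℝ)*a1^4*a2^2*a3 + (48 : ℝ)*a1^4*a2^2*a3*y1 + (96 : ℝ)*a1^4*a2^2*a3^2 + (-240 : ℝ)*a1^4*a2^2*a3^2*y1 + (452 : ℝ)*a1^4*a2^2*a3^3 + (-14 : ℝ)*a1^4*a2^3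 + (12 : ℝ)*a1^4*a2^3*y1 + (60 : ℝ)*a1^4*a2^3*a3 + (-140 : ℝ)*a1^4*a2^3*a3*y1 + (308 : ℝ)*a1^4*a2^3*a3^2 + (12 : ℝ)*a1^4*a2^4 + (-20 : ℝ)*a1^4*a2^4*y1 + (64 : ℝ)*a1^4*a2^4*a3 + (-4 : ℝ)*a1^4*a2^5 + (-4 : ℝ)*a1^5*y1 + (14 : ℝ)*a1^5*a3*y1 + (-22 : ℝ)*a1^5*a3^2 + (12 : ℝ)*a1^5*a3^2*y1 + (12 : ℝ)*a1^5*a3^3 + (-36 : ℝ)*a1^5*a3^3*y1 + (60 : ℝ)*a1^5*a3^4 + (14 : ℝ)*a1^5*a2*y1 + (-36 : ℝ)*a1^5*a2*a3 + (24 : ℝ)*a1^5*a2*a3*y1 + (36 : ℝ)*a1^5*a2*a3^2 + (-132 : ℝ)*a1^5*a2*a3^2*y1 + (216 : ℝ)*a1^5*a2*a3^3 + (-14 : ℝ)*a1^5*a2^2 + (12 : ℝ)*a1^5*a2^2*y1 + (36 : ℝ)*a1^5*a2^2*a3 + (-132 : ℝ)*a1^5*a2^2*a3*y1 + (264 : ℝ)*a1^5*a2^2*a3^2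 + (12 : ℝ)*a1^5*a2^3 + (-36 : ℝ)*a1^5*a2^3*y1 + (120 : ℝ)*a1^5*a2^3*a3 + (12 : ℝ)*a1^5*a2^4 + (4 : ℝ)*a1^6*y1 + (-4 : ℝ)*a1^6*a3 + (4 : ℝ)*a1^6*a3*y1 + (4 : ℝ)*a1^6*a3^2 + (-28 : ℝ)*a1^6*a3^2*y1 + (36 : ℝ)*a1^6*a3^3 + (-4 : ℝ)*a1^6*a2 + (4 : ℝ)*a1^6*a2*y1 + (8 : ℝ)*a1^6*a2*a3 + (-56 : ℝ)*a1^6*a2*a3*y1 + (92 : ℝ)*a1^6*a2*a3^2 + (4 : ℝ)*a1^6*a2^2 + (-28 : ℝ)*a1^6*a2^2*y1 + (76 : ℝ)*a1^6*a2^2*a3 + (20 : ℝ)*a1^6*a2^3 + (-8 : ℝ)*a1^7*a3*y1 + (8 : ℝ)*a1^7*a3^2 + (-8 : ℝ)*a1^7*a2*y1 + (16 : ℝ)*a1^7*a2*a3 + (8 : ℝ)*a1^7*a2^2)*hG + ((-1 : ℝ)*a2*a3 + (2 : ℝ)*a2*a3^2 + (2 : ℝ)*a2^2*a3 + (1 :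 ℝ)*a2^2*a3*y1 + (1 : ℝ)*a2^2*a3^2 + (-2 : ℝ)*a2^2*a3^2*y1 + (-6 : ℝ)*a2^2*a3^3 + (1 : ℝ)*a2^3*a3 + (-2 : ℝ)*a2^3*a3*y1 + (-8 : ℝ)*a2^3*a3^2 + (4 : ℝ)*a2^3*a3^3*y1 + (4 : ℝ)*a2^3*a3^4 + (-2 : ℝ)*a2^4*a3 + (4 : ℝ)*a2^4*a3^2*y1 + (8 : ℝ)*a2^4*a3^3 + (4 : ℝ)*a2^5*a3^2 + (-1 : ℝ)*a1*a3 + (2 : ℝ)*a1*a3^2 + (-1 : ℝ)*a1*a2 + (6 : ℝ)*a1*a2*a3 + (2 : ℝ)*a1*a2*a3*y1 + (2 : ℝ)*a1*a2*a3^2 + (-4 : ℝ)*a1*a2*a3^2*y1 + (-12 : ℝ)*a1*a2*a3^3 + (2 : ℝ)*a1*a2^2 + (1 : ℝ)*a1*a2^2*y1 + (3 : ℝ)*a1*a2^2*a3 + (-8 : ℝ)*a1*a2^2*a3*y1 + (-28 : ℝ)*a1*a2^2*a3^2 + (12 : ℝ)*a1*a2^2*a3^3*y1 + (12 : ℝ)*a1*a2^2*a3^4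 + (1 : ℝ)*a1*a2^3 + (-2 : ℝ)*a1*a2^3*y1 + (-18 : ℝ)*a1*a2^3*a3 + (20 : ℝ)*a1*a2^3*a3^2*y1 + (32 : ℝ)*a1*a2^3*a3^3 + (-2 : ℝ)*a1*a2^4 + (8 : ℝ)*a1*a2^4*a3*y1 + (28 : ℝ)*a1*a2^4*a3^2 + (8 : ℝ)*a1*a2^5*a3 + (-1 : ℝ)*a1^2 + (4 : ℝ)*a1^2*a3 + (1 : ℝ)*a1^2*a3*y1 + (1 : ℝ)*a1^2*a3^2 + (-2 : ℝ)*a1^2*a3^2*y1 + (-6 : ℝ)*a1^2*a3^3 + (4 : ℝ)*a1^2*a2 + (2 : ℝ)*a1^2*a2*y1 + (3 : ℝ)*a1^2*a2*a3 + (-10 : ℝ)*a1^2*a2*a3*y1 + (-32 : ℝ)*a1^2*a2*a3^2 + (12 : ℝ)*a1^2*a2*a3^3*y1 + (12 : ℝ)*a1^2*a2*a3^4 + (2 : ℝ)*a1^2*a2^2 + (-6 : ℝ)*a1^2*a2^2*y1 + (-36 : ℝ)*a1^2*a2^2*a3 + (36 : ℝ)*a1^2*a2^2*a3^2*y1 +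 (48 : ℝ)*a1^2*a2^2*a3^3 + (-10 : ℝ)*a1^2*a2^3 + (28 : ℝ)*a1^2*a2^3*a3*y1 + (64 : ℝ)*a1^2*a2^3*a3^2 + (4 : ℝ)*a1^2*a2^4*y1 + (32 : ℝ)*a1^2*a2^4*a3 + (4 : ℝ)*a1^2*a2^5 + (2 : ℝ)*a1^3 + (1 : ℝ)*a1^3*y1 + (1 : ℝ)*a1^3*a3 + (-4 : ℝ)*a1^3*a3*y1 + (-12 : ℝ)*a1^3*a3^2 + (4 : ℝ)*a1^3*a3^3*y1 + (4 : ℝ)*a1^3*a3^4 + (1 : ℝ)*a1^3*a2 + (-6 : ℝ)*a1^3*a2*y1 + (-26 : ℝ)*a1^3*a2*a3 + (28 : ℝ)*a1^3*a2*a3^2*y1 + (32 : ℝ)*a1^3*a2*a3^3 + (-14 : ℝ)*a1^3*a2^2 + (36 : ℝ)*a1^3*a2^2*a3*y1 + (64 : ℝ)*a1^3*a2^2*a3^2 + (12 : ℝ)*a1^3*a2^3*y1 + (48 : ℝ)*a1^3*a2^3*a3 + (12 : ℝ)*a1^3*a2^4 + (-2 : ℝ)*a1^4*y1 + (-6 :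 ℝ)*a1^4*a3 + (8 : ℝ)*a1^4*a3^2*y1 + (8 : ℝ)*a1^4*a3^3 + (-6 : ℝ)*a1^4*a2 + (20 : ℝ)*a1^4*a2*a3*y1 + (28 : ℝ)*a1^4*a2*a3^2 + (12 : ℝ)*a1^4*a2^2*y1 + (32 : ℝ)*a1^4*a2^2*a3 + (12 : ℝ)*a1^4*a2^3 + (4 : ℝ)*a1^5*a3*y1 + (4 : ℝ)*a1^5*a3^2 + (4 : ℝ)*a1^5*a2*y1 + (8 : ℝ)*a1^5*a2*a3 + (4 : ℝ)*a1^5*a2^2)*hW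
        have hz := pow_eq_zero_iff (two_ne_zero) |>.mp hE
        rcases mul_eq_zero.mp hz with h' | h'
        · rcases mul_eq_zero.mp h' with h'' | h''
          · rcases mul_eq_zero.mp h'' with h3' | h3'
            · exact absurd h3' h12
            · exact absurd h3' h13
          · exact absurd h'' h23
        · exact h'
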